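/- arXiv:0906.5191 — 3 statements merged into one kernel-verified Lean document; each statement's English description precedes it below -/
import Mathlib

section
/- Let n ≥ 2 be an integer, set ε = n/(n−1) and s₃ = 2ε/(ε−1) = 2n. Let A : ℝ → ℝ be a positive function, c₁ > 0 a constant, and N > 1 a natural number such that: (i) A(pε)^p ≤ c₁ · p · A(p−1)^{p−1} for every real p ≥ N, and (ii) there is a constant c₀ > 0 with A(p) < c₀ for all p ∈ [N−1, Nε]. Then there exist constants s₁ ≥ 1 and s₂ > 0, depending only on c₀, c₁, n and N, such that A(p) ≤ s₁ · (s₂ p)^{−s₃/p} for all real p ≥ N−1. In particular A is bounded on [N−1, ∞) by a constant independent of p. -/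
lemma moser_core (m : ℕ) (a p ε : ℝ) (ha : 1 ≤ a) (hpa : p ≤ 2*a) (hp0 : 0 ≤ p)
    (hε0 : 0 ≤ ε) (hε2 : ε ≤ 2) :
    p * (p*ε)^(2*m) ≤ 2^(4*(m+1)) * a^(2*m+2) := by
  have h1 : p*ε ≤ 4*a := by nlinarith
  have h2 : (p*ε)^(2*m) ≤ (4*a)^(2*m) := pow_le_pow_left₀ (by positivity) h1 _
  have h3 : p * (p*ε)^(2*m) ≤ (2*a^2) * ((4*a)^(2*m)) :=
    mul_le_mul (by nlinarith) h2 (by positivity) (by positivity)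
  calc p * (p*ε)^(2*m) ≤ (2*a^2) * ((4*a)^(2*m)) := h3
    _ = 2 * 4^(2*m) * (a^(2*m+2)) := by ring
    _ ≤ 2^(4*(m+1)) * a^(2*m+2) := by
        apply mul_le_mul_of_nonneg_right _ (by positivity)
        have h4 : (4:ℝ) = 2^2 := by norm_num
        rw [h4, ← pow_mul]
        calc (2:ℝ) * 2^(2*(2*m)) = 2^(4*m+1) := by rw [pow_succ]; ring_nf
          _ ≤ 2^(4*(m+1)) := pow_le_pow_right₀ one_le_two (by omega)

lemma moser_step (m : ℕ) (hm : 1 ≤ m) (ε s₃ : ℝ)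
    (hε : ε = ((m+1 : ℕ):ℝ)/(((m+1 : ℕ):ℝ)-1)) (hs₃ : s₃ = 2*((m+1:ℕ):ℝ))
    (A : ℝ → ℝ) (hApos : ∀ p : ℝ, 0 < A p)
    (c₁ : ℝ) (hc₁ : 0 < c₁) (N : ℕ) (hN : 1 < N)
    (s₁ s₂ : ℝ) (hs₂ : s₂ = (((N:ℝ))*ε)⁻¹)
    (hs₁ : c₁ * (s₂⁻¹)^2 * 2^(4*(m+1)) ≤ s₁) (hs₁1 : 1 ≤ s₁)
    (p : ℝ) (hp : (N:ℝ) ≤ p)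
    (hit : A (p*ε) ^ p ≤ c₁ * p * A (p-1) ^ (p-1))
    (hIH : A (p-1) ≤ s₁ * (s₂*(p-1)) ^ (-s₃/(p-1))) :
    A (p*ε) ≤ s₁ * (s₂*(p*ε)) ^ (-s₃/(p*ε)) ∧ A (p*ε) ≤ s₁ := by
  have hmR : (1:ℝ) ≤ (m:ℝ) := by exact_mod_cast hm
  have hεval : ε = ((m:ℝ)+1)/(m:ℝ) := by rw [hε]; push_cast; ring_nf
  have hε1 : 1 < ε := by rw [hεval]; rw [lt_div_iff₀ (by linarith)]; linarith
  have hε2 : ε ≤ 2 := by rw [hεval, div_le_iff₀ (by linarith)]; linarith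
  have hNR : (2:ℝ) ≤ (N:ℝ) := by exact_mod_cast hN
  have hp2 : (2:ℝ) ≤ p := le_trans hNR hp
  have hq1 : (1:ℝ) ≤ p - 1 := by linarith
  have hq0 : (0:ℝ) < p - 1 := by linarith
  have hs₂0 : 0 < s₂ := by rw [hs₂]; positivity
  have ht0 : 0 < p * ε := by positivity
  have hs₁0 : (0:ℝ) < s₁ := by linarith
  set q : ℝ := p - 1 with hqdef
  -- exponent identities
  have hs₃pos : 0 < s₃ := by rw [hs₃]; positivity
  have e1 : -s₃/q * q = -s₃ := by field_simp
  have e2 : -s₃/(p*ε) * p = -s₃/ε := by field_simp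
  have e3 : (-s₃ : ℝ) = -((2*(m+1) : ℕ) : ℝ) := by rw [hs₃]; push_cast; ring
  have e4 : -s₃/ε = -((2*m : ℕ) : ℝ) := by
    rw [hs₃, hεval]; push_cast; field_simp
  -- raise IH to power q
  have h1 : A q ^ q ≤ (s₁ * (s₂*q) ^ (-s₃/q)) ^ q :=
    Real.rpow_le_rpow (hApos q).le hIH (by linarith)
  have h2 : (s₁ * (s₂*q) ^ (-s₃/q)) ^ q = s₁ ^ q * (s₂*q) ^ (-s₃) := by
    rw [Real.mul_rpow hs₁0.le (by positivity),
      ← Real.rpow_mul (by positivity : (0:ℝ) ≤ s₂*q), e1]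
  have h3 : A (p*ε) ^ p ≤ c₁ * p * (s₁ ^ q * (s₂*q) ^ (-s₃)) := by
    refine hit.trans (mul_le_mul_of_nonneg_left (h1.trans_eq h2) (by positivity))
  have h4 : (s₁ * (s₂*(p*ε)) ^ (-s₃/(p*ε))) ^ p
      = s₁ ^ q * s₁ * (s₂*(p*ε)) ^ (-s₃/ε) := by
    rw [Real.mul_rpow hs₁0.le (by positivity),
      ← Real.rpow_mul (by positivity : (0:ℝ) ≤ s₂*(p*ε)), e2]
    congr 1
    rw [show p = q + 1 by simp [hqdef], Real.rpow_add hs₁0, Real.rpow_one]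
  have main : A (p*ε) ≤ s₁ * (s₂*(p*ε)) ^ (-s₃/(p*ε)) := by
    rw [← Real.rpow_le_rpow_iff (hApos _).le (by positivity) (by positivity : (0:ℝ) < p)]
    refine h3.trans ?_
    rw [h4]
    -- cancel s₁ ^ q
    have hkey : c₁ * p * (s₂*q) ^ (-s₃) ≤ s₁ * (s₂*(p*ε)) ^ (-s₃/ε) := by
      rw [e4, e3, Real.rpow_neg (by positivity), Real.rpow_neg (by positivity),
        Real.rpow_natCast, Real.rpow_natCast, ← div_eq_mul_inv, ← div_eq_mul_inv,
        div_le_div_iff₀ (by positivity) (by positivity)]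
      -- c₁ * p * (s₂*(p*ε))^(2m) ≤ s₁ * (s₂*q)^(2(m+1))
      have core := moser_core m q p ε hq1 (by linarith) (by linarith) (by linarith) hε2
      calc c₁ * p * (s₂ * (p*ε)) ^ (2*m)
          = c₁ * s₂^(2*m) * (p * (p*ε)^(2*m)) := by rw [mul_pow]; ring
        _ ≤ c₁ * s₂^(2*m) * (2^(4*(m+1)) * q^(2*m+2)) := by
            exact mul_le_mul_of_nonneg_left core (by positivity)
        _ = (c₁ * (s₂⁻¹)^2 * 2^(4*(m+1))) * (s₂^(2*m+2) * q^(2*m+2)) := by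
            field_simp; ring
        _ ≤ s₁ * (s₂^(2*m+2) * q^(2*m+2)) := by
            exact mul_le_mul_of_nonneg_right hs₁ (by positivity)
        _ = s₁ * (s₂*q)^(2*(m+1)) := by rw [mul_pow]; ring_nf
    calc c₁ * p * (s₁ ^ q * (s₂*q) ^ (-s₃)) = s₁ ^ q * (c₁ * p * (s₂*q) ^ (-s₃)) := by ring
      _ ≤ s₁ ^ q * (s₁ * (s₂*(p*ε)) ^ (-s₃/ε)) := by
          exact mul_le_mul_of_nonneg_left hkey (by positivity)
      _ = s₁ ^ q * s₁ * (s₂*(p*ε)) ^ (-s₃/ε) := by ring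
  refine ⟨main, main.trans ?_⟩
  have hfac : (s₂*(p*ε)) ^ (-s₃/(p*ε)) ≤ 1 := by
    apply Real.rpow_le_one_of_one_le_of_nonpos
    · rw [hs₂]
      have hrw : ((N:ℝ)*ε)⁻¹ * (p*ε) = p / N := by
        field_simp
      rw [hrw, le_div_iff₀ (by positivity : (0:ℝ) < (N:ℝ))]
      linarith
    · apply div_nonpos_of_nonpos_of_nonneg <;> [linarith; positivity]
  calc s₁ * (s₂*(p*ε)) ^ (-s₃/(p*ε)) ≤ s₁ * 1 := by
        exact mul_le_mul_of_nonneg_left hfac hs₁0.le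
    _ = s₁ := mul_one s₁


/-- Moser-type iteration lemma: key step of the C⁰-estimate for the
Monge–Ampère equation on conical Kähler manifolds. -/
theorem moser_iteration_basic
    (n : ℕ) (hn : 2 ≤ n)
    (ε : ℝ) (hε : ε = (n : ℝ) / ((n : ℝ) - 1))
    (s₃ : ℝ) (hs₃ : s₃ = 2 * n)
    (A : ℝ → ℝ) (hApos : ∀ p : ℝ, 0 < A p)
    (c₁ : ℝ) (hc₁ : 0 < c₁)
    (N : ℕ) (hN : 1 < N)
    (hiter : ∀ p : ℝ, (N : ℝ) ≤ p →
      A (p * ε) ^ p ≤ c₁ * p * A (p - 1) ^ (p - 1))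
    (c₀ : ℝ) (hc₀ : 0 < c₀)
    (hinit : ∀ p : ℝ, p ∈ Set.Icc ((N : ℝ) - 1) ((N : ℝ) * ε) → A p < c₀) :
    (∃ s₁ s₂ : ℝ, 1 ≤ s₁ ∧ 0 < s₂ ∧
      ∀ p : ℝ, (N : ℝ) - 1 ≤ p → A p ≤ s₁ * (s₂ * p) ^ (-s₃ / p)) ∧
    ∃ C : ℝ, ∀ p : ℝ, (N : ℝ) - 1 ≤ p → A p ≤ C := by
  obtain ⟨m, rfl⟩ : ∃ m, n = m + 1 := ⟨n - 1, by omega⟩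
  have hm : 1 ≤ m := by omega
  have hmR : (1:ℝ) ≤ (m:ℝ) := by exact_mod_cast hm
  have hεm : ε = ((m+1 : ℕ):ℝ)/(((m+1 : ℕ):ℝ)-1) := by rw [hε]
  have hεval : ε = ((m:ℝ)+1)/(m:ℝ) := by rw [hε]; push_cast; ring_nf
  have hε1 : 1 < ε := by rw [hεval, lt_div_iff₀ (by linarith)]; linarith
  have hε2 : ε ≤ 2 := by rw [hεval, div_le_iff₀ (by linarith)]; linarith
  have hs₃m : s₃ = 2*((m+1:ℕ):ℝ) := by rw [hs₃]
  have hNR : (2:ℝ) ≤ (N:ℝ) := by exact_mod_cast hN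
  have hN1 : (1:ℝ) ≤ (N:ℝ) - 1 := by linarith
  have hs₃pos : 0 < s₃ := by rw [hs₃]; positivity
  set s₂ : ℝ := (((N:ℝ))*ε)⁻¹ with hs₂
  have hs₂0 : 0 < s₂ := by rw [hs₂]; positivity
  set s₁ : ℝ := max 1 (max c₀ (c₁ * (s₂⁻¹)^2 * 2^(4*(m+1)))) with hs₁def
  have hs₁1 : (1:ℝ) ≤ s₁ := le_max_left _ _
  have hs₁c₀ : c₀ ≤ s₁ := le_trans (le_max_left _ _) (le_max_right _ _)
  have hs₁big : c₁ * (s₂⁻¹)^2 * 2^(4*(m+1)) ≤ s₁ :=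
    le_trans (le_max_right _ _) (le_max_right _ _)
  have hs₁0 : (0:ℝ) < s₁ := by linarith
  -- base case bound
  have base : ∀ t : ℝ, (N:ℝ) - 1 ≤ t → t ≤ (N:ℝ)*ε →
      A t ≤ s₁ * (s₂*t) ^ (-s₃/t) ∧ A t ≤ s₁ := by
    intro t ht1 ht2
    have ht0 : 0 < t := by linarith
    have hAt : A t ≤ s₁ := le_trans (hinit t ⟨ht1, ht2⟩).le hs₁c₀
    refine ⟨hAt.trans ?_, hAt⟩
    have hfac : 1 ≤ (s₂*t) ^ (-s₃/t) := by
      apply Real.one_le_rpow_of_pos_of_le_one_of_nonpos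
      · positivity
      · rw [hs₂]
        rw [inv_mul_le_iff₀ (by positivity), mul_one]
        exact ht2
      · apply div_nonpos_of_nonpos_of_nonneg <;> [linarith; positivity]
    calc s₁ = s₁ * 1 := (mul_one s₁).symm
      _ ≤ s₁ * (s₂*t) ^ (-s₃/t) := mul_le_mul_of_nonneg_left hfac hs₁0.le
  -- induction
  have key : ∀ k : ℕ, ∀ t : ℝ, (N:ℝ) - 1 ≤ t → t ≤ (N:ℝ)*ε + k →
      A t ≤ s₁ * (s₂*t) ^ (-s₃/t) ∧ A t ≤ s₁ := by
    intro k
    induction k with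
    | zero => intro t ht1 ht2; exact base t ht1 (by simpa using ht2)
    | succ k ih =>
      intro t ht1 ht2
      by_cases hcase : t ≤ (N:ℝ)*ε
      · exact base t ht1 hcase
      · push_neg at hcase
        set p : ℝ := t / ε with hpdef
        have hε0 : (0:ℝ) < ε := by linarith
        have htp : p * ε = t := div_mul_cancel₀ t hε0.ne'
        have ht0 : (0:ℝ) < t := by linarith
        have hpN : (N:ℝ) ≤ p := by
          rw [hpdef, le_div_iff₀ hε0]; linarith
        have hplt : p < t := by
          rw [hpdef, div_lt_iff₀ hε0]; nlinarith
        have hq1 : (N:ℝ) - 1 ≤ p - 1 := by linarith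
        have hq2 : p - 1 ≤ (N:ℝ)*ε + k := by push_cast at ht2 ⊢; linarith
        obtain ⟨hIH, -⟩ := ih (p - 1) hq1 hq2
        have step := moser_step m hm ε s₃ hεm hs₃m A hApos c₁ hc₁ N hN s₁ s₂ hs₂
          hs₁big hs₁1 p hpN (hiter p hpN) hIH
        rw [htp] at step
        exact step
  constructor
  · refine ⟨s₁, s₂, hs₁1, hs₂0, fun p hp => ?_⟩
    obtain ⟨k, hk⟩ := exists_nat_ge (p - (N:ℝ)*ε)
    exact (key k p hp (by linarith)).1
  · refine ⟨s₁, fun p hp => ?_⟩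
    obtain ⟨k, hk⟩ := exists_nat_ge (p - (N:ℝ)*ε)
    exact (key k p hp (by linarith)).2
end

section
/- Let n ≥ 2 be an integer, set ε = n/(n−1) and s₃ = 2ε/(ε−1) = 2n. Let B : ℝ → ℝ be a positive function and c₁, c₂, c₃ > 0 constants, and N > 1 a natural number such that: (i) B(pε)^p ≤ c₁ · p · B(p−1)^{p−1} + (c₂ p² + c₃) · B(p)^p for every real p ≥ N, and (ii) there is a constant c₀ > 0 with B(p) < c₀ for all p ∈ [N−1, Nε]. Then there exist constants s₁ ≥ 1 and s₂ > 0, depending only on c₀, c₁, c₂, c₃, n and N, such that B(p) ≤ s₁ · (s₂ p)^{−s₃/p} for all real p ≥ N−1. In particular B is bounded on [N−1, ∞) by a constant independent of p. -/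
set_option maxHeartbeats 1600000 in
/-- Generalized Moser-type iteration lemma with the extra term `(c₂p² + c₃)B(p)^p`,
used in the weighted C⁰-estimate for the Monge–Ampère equation on conical
Kähler manifolds. -/
theorem moser_iteration_weighted
    (n : ℕ) (hn : 2 ≤ n)
    (ε : ℝ) (hε : ε = (n : ℝ) / ((n : ℝ) - 1))
    (s₃ : ℝ) (hs₃ : s₃ = 2 * n)
    (B : ℝ → ℝ) (hBpos : ∀ p : ℝ, 0 < B p)
    (c₁ c₂ c₃ : ℝ) (hc₁ : 0 < c₁) (hc₂ : 0 < c₂) (hc₃ : 0 < c₃)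
    (N : ℕ) (hN : 1 < N)
    (hiter : ∀ p : ℝ, (N : ℝ) ≤ p →
      B (p * ε) ^ p ≤ c₁ * p * B (p - 1) ^ (p - 1) + (c₂ * p ^ 2 + c₃) * B p ^ p)
    (c₀ : ℝ) (hc₀ : 0 < c₀)
    (hinit : ∀ p : ℝ, p ∈ Set.Icc ((N : ℝ) - 1) ((N : ℝ) * ε) → B p < c₀) :
    (∃ s₁ s₂ : ℝ, 1 ≤ s₁ ∧ 0 < s₂ ∧
      ∀ p : ℝ, (N : ℝ) - 1 ≤ p → B p ≤ s₁ * (s₂ * p) ^ (-s₃ / p)) ∧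
    ∃ C : ℝ, ∀ p : ℝ, (N : ℝ) - 1 ≤ p → B p ≤ C := by
  have hn1 : (1:ℝ) ≤ (n:ℝ) - 1 := by
    have : (2:ℝ) ≤ (n:ℝ) := by exact_mod_cast hn
    linarith
  have hε1 : 1 < ε := by
    rw [hε, lt_div_iff₀ (by linarith)]
    linarith
  have hεpos : (0:ℝ) < ε := by linarith
  have hN2 : (2:ℝ) ≤ (N:ℝ) := by exact_mod_cast hN
  obtain ⟨C', hC'def⟩ : ∃ x : ℝ, x = c₁ + c₂ + c₃ := ⟨_, rfl⟩
  have hC' : 0 < C' := by rw [hC'def]; positivity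
  obtain ⟨L, hLdef⟩ : ∃ x : ℝ, x = Real.log ε := ⟨_, rfl⟩
  have hL0 : 0 ≤ L := by rw [hLdef]; exact Real.log_nonneg hε1.le
  obtain ⟨A, hAdef⟩ :
      ∃ x : ℝ, x = (|Real.log C'| + 2 * Real.log N + 2 * L) / 2 := ⟨_, rfl⟩
  have hA0 : 0 ≤ A := by
    have h1 : 0 ≤ Real.log N := Real.log_nonneg (by linarith)
    have h2 := abs_nonneg (Real.log C')
    rw [hAdef]; linarith
  obtain ⟨a, hadef⟩ : ∃ f : ℕ → ℝ, f = fun k : ℕ => (A + L * (k:ℝ)) * (ε⁻¹)^k := ⟨_, rfl⟩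
  have haval : ∀ k : ℕ, a k = (A + L * (k:ℝ)) * (ε⁻¹)^k := by
    intro k; rw [hadef]
  have ha0 : ∀ k, 0 ≤ a k := by
    intro k
    rw [haval k]
    exact mul_nonneg (add_nonneg hA0 (mul_nonneg hL0 k.cast_nonneg)) (by positivity)
  have hεinv : ε⁻¹ < 1 := inv_lt_one_of_one_lt₀ hε1
  have hεinv0 : (0:ℝ) ≤ ε⁻¹ := by positivity
  have hsum : Summable a := by
    have h1 : Summable (fun k : ℕ => A * (ε⁻¹)^k) :=
      (summable_geometric_of_lt_one hεinv0 hεinv).mul_left A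
    have h2 : Summable (fun k : ℕ => (k:ℝ) * (ε⁻¹)^k) := by
      have := summable_pow_mul_geometric_of_norm_lt_one (r := ε⁻¹) 1
        (by rwa [Real.norm_eq_abs, abs_of_nonneg hεinv0])
      simpa using this
    exact Summable.congr (h1.add (h2.mul_left L)) (fun k => by rw [haval k]; ring)
  obtain ⟨T, hTdef⟩ : ∃ x : ℝ, x = ∑' k, a k := ⟨_, rfl⟩
  have hT0 : 0 ≤ T := by rw [hTdef]; exact tsum_nonneg ha0
  have hS : ∀ k, ∑ j ∈ Finset.range k, a j ≤ T := by
    intro k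
    rw [hTdef]
    exact Summable.sum_le_tsum (Finset.range k) (fun i _ => ha0 i) hsum
  obtain ⟨M₀, hM₀def⟩ : ∃ x : ℝ, x = max c₀ 1 := ⟨_, rfl⟩
  have hM₀1 : 1 ≤ M₀ := by rw [hM₀def]; exact le_max_right _ _
  have hM₀c : c₀ ≤ M₀ := by rw [hM₀def]; exact le_max_left _ _
  have hM₀pos : 0 < M₀ := by linarith
  -- key induction
  have key : ∀ k : ℕ, ∀ p : ℝ, (N:ℝ) - 1 ≤ p → p ≤ (N:ℝ) * ε ^ (k+1) →
      B p ≤ M₀ * Real.exp (∑ j ∈ Finset.range k, a j) := by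
    intro k
    induction k with
    | zero =>
      intro p hp1 hp2
      have h := hinit p ⟨hp1, by simpa using hp2⟩
      simp only [Finset.range_zero, Finset.sum_empty, Real.exp_zero, mul_one]
      exact h.le.trans hM₀c
    | succ k ih =>
      intro p hp1 hp2
      have hSk : ∑ j ∈ Finset.range (k+1), a j = (∑ j ∈ Finset.range k, a j) + a k :=
        Finset.sum_range_succ a k
      by_cases hcase : p ≤ (N:ℝ) * ε ^ (k+1)
      · refine (ih p hp1 hcase).trans ?_
        apply mul_le_mul_of_nonneg_left _ hM₀pos.le
        exact Real.exp_le_exp.mpr (by rw [hSk]; linarith [ha0 k])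
      · push_neg at hcase
        obtain ⟨q, hqdef⟩ : ∃ x : ℝ, x = p / ε := ⟨_, rfl⟩
        have hεk1 : (1:ℝ) ≤ ε ^ k := one_le_pow₀ hε1.le
        have hεkpos : (0:ℝ) < ε ^ k := by positivity
        have hqgt : (N:ℝ) * ε ^ k < q := by
          rw [hqdef, lt_div_iff₀ hεpos]
          calc (N:ℝ) * ε ^ k * ε = (N:ℝ) * ε ^ (k+1) := by ring
            _ < p := hcase
        have hNεk : (2:ℝ) * 1 ≤ (N:ℝ) * ε ^ k :=
          mul_le_mul hN2 hεk1 zero_le_one (by linarith)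
        have hNεk' : (N:ℝ) * 1 ≤ (N:ℝ) * ε ^ k :=
          mul_le_mul_of_nonneg_left hεk1 (by linarith)
        have hq2 : (2:ℝ) ≤ q := by linarith
        have hqN : (N:ℝ) ≤ q := by linarith
        have hq0 : (0:ℝ) < q := by linarith
        have hqle : q ≤ (N:ℝ) * ε ^ (k+1) := by
          rw [hqdef, div_le_iff₀ hεpos]
          calc p ≤ (N:ℝ) * ε ^ (k+1+1) := hp2
            _ = (N:ℝ) * ε ^ (k+1) * ε := by ring
        have hqε : q * ε = p := by
          rw [hqdef]; exact div_mul_cancel₀ p hεpos.ne'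
        obtain ⟨M, hMdef⟩ :
            ∃ x : ℝ, x = M₀ * Real.exp (∑ j ∈ Finset.range k, a j) := ⟨_, rfl⟩
        have hexp1 : 1 ≤ Real.exp (∑ j ∈ Finset.range k, a j) :=
          Real.one_le_exp (Finset.sum_nonneg fun i _ => ha0 i)
        have hM1 : 1 ≤ M := by
          rw [hMdef]
          calc (1:ℝ) = 1*1 := by ring
            _ ≤ M₀ * Real.exp (∑ j ∈ Finset.range k, a j) :=
              mul_le_mul hM₀1 hexp1 zero_le_one hM₀pos.le
        have hMpos : 0 < M := by linarith
        have hBq : B q ≤ M := by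
          rw [hMdef]; exact ih q (by linarith) hqle
        have hBq1 : B (q - 1) ≤ M := by
          rw [hMdef]; exact ih (q - 1) (by linarith) (by linarith)
        have hMq : 0 < M ^ q := Real.rpow_pos_of_pos hMpos q
        have e1 : B (q-1) ^ (q-1) ≤ M ^ (q-1) :=
          Real.rpow_le_rpow (hBpos _).le hBq1 (by linarith)
        have e2 : M ^ (q-1) ≤ M ^ q :=
          Real.rpow_le_rpow_of_exponent_le hM1 (by linarith)
        have e3 : B q ^ q ≤ M ^ q :=
          Real.rpow_le_rpow (hBpos _).le hBq (by linarith)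
        have h1 := hiter q hqN
        rw [hqε] at h1
        have e4 : B p ^ q ≤ (C' * q^2) * M ^ q := by
          have t1 : c₁ * q * B (q-1) ^ (q-1) ≤ c₁ * q * M ^ q :=
            mul_le_mul_of_nonneg_left (e1.trans e2) (mul_nonneg hc₁.le hq0.le)
          have t2 : (c₂ * q^2 + c₃) * B q ^ q ≤ (c₂ * q^2 + c₃) * M ^ q :=
            mul_le_mul_of_nonneg_left e3
              (add_nonneg (mul_nonneg hc₂.le (sq_nonneg q)) hc₃.le)
          have t3 : c₁ * q + (c₂ * q^2 + c₃) ≤ C' * q^2 := by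
            have hqq : q * 1 ≤ q * q := mul_le_mul_of_nonneg_left (by linarith) hq0.le
            have h1q : (1:ℝ) * 1 ≤ q * q :=
              mul_le_mul (by linarith) (by linarith) zero_le_one hq0.le
            have u1 : c₁ * (q * 1) ≤ c₁ * (q * q) :=
              mul_le_mul_of_nonneg_left hqq hc₁.le
            have u2 : c₃ * ((1:ℝ) * 1) ≤ c₃ * (q * q) :=
              mul_le_mul_of_nonneg_left h1q hc₃.le
            rw [hC'def, pow_two]
            linarith [u1, u2]
          have t4 := mul_le_mul_of_nonneg_right t3 hMq.le
          linarith [t1, t2, t4, h1]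
        have hCq : (0:ℝ) < C' * q^2 := by positivity
        -- take q-th roots
        have e7 : B p ≤ (C' * q^2) ^ q⁻¹ * M := by
          have h := Real.rpow_le_rpow (Real.rpow_nonneg (hBpos p).le q) e4
            (inv_nonneg.mpr hq0.le)
          rw [← Real.rpow_mul (hBpos p).le, mul_inv_cancel₀ hq0.ne', Real.rpow_one,
            Real.mul_rpow hCq.le hMq.le, ← Real.rpow_mul hMpos.le,
            mul_inv_cancel₀ hq0.ne', Real.rpow_one] at h
          exact h
        -- bound the multiplicative factor
        have hlog : Real.log (C' * q^2) * q⁻¹ ≤ a k := by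
          by_cases hLneg : Real.log (C' * q^2) ≤ 0
          · exact (mul_nonpos_of_nonpos_of_nonneg hLneg (inv_nonneg.mpr hq0.le)).trans
              (ha0 k)
          · push_neg at hLneg
            have hlogq : Real.log q ≤ Real.log N + ((k:ℝ)+1) * L := by
              have h := Real.log_le_log hq0 hqle
              rw [Real.log_mul (by positivity) (by positivity), Real.log_pow] at h
              rw [hLdef]
              push_cast at h
              linarith
            have hlogC : Real.log (C' * q^2) ≤
                |Real.log C'| + 2*Real.log N + 2*((k:ℝ)+1)*L := by
              rw [Real.log_mul hC'.ne' (by positivity), Real.log_pow]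
              have h := le_abs_self (Real.log C')
              push_cast
              linarith
            have hinvq : q⁻¹ ≤ (ε⁻¹)^k / 2 := by
              have h2 : (2:ℝ) * ε^k ≤ q := by
                have := mul_le_mul_of_nonneg_right hN2 hεkpos.le
                linarith
              have h3 : q⁻¹ ≤ ((2:ℝ)*ε^k)⁻¹ :=
                inv_anti₀ (by positivity) h2
              calc q⁻¹ ≤ ((2:ℝ)*ε^k)⁻¹ := h3
                _ = (ε⁻¹)^k/2 := by rw [mul_inv, inv_pow]; ring
            have hRnn : 0 ≤ |Real.log C'| + 2*Real.log N + 2*((k:ℝ)+1)*L := by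
              have h1 : 0 ≤ Real.log N := Real.log_nonneg (by linarith)
              have h2 := abs_nonneg (Real.log C')
              have h3 : (0:ℝ) ≤ ((k:ℝ)+1) * L := by
                have := k.cast_nonneg (α := ℝ)
                exact mul_nonneg (by linarith) hL0
              linarith
            calc Real.log (C' * q^2) * q⁻¹
                ≤ (|Real.log C'| + 2*Real.log N + 2*((k:ℝ)+1)*L) * ((ε⁻¹)^k/2) :=
                  mul_le_mul hlogC hinvq (inv_nonneg.mpr hq0.le) hRnn
              _ = a k := by rw [haval k, hAdef]; ring
        have e8 : (C' * q^2) ^ q⁻¹ ≤ Real.exp (a k) := by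
          rw [Real.rpow_def_of_pos hCq]
          exact Real.exp_le_exp.mpr hlog
        calc B p ≤ (C' * q^2) ^ q⁻¹ * M := e7
          _ ≤ Real.exp (a k) * M := mul_le_mul_of_nonneg_right e8 hMpos.le
          _ = M₀ * Real.exp (∑ j ∈ Finset.range (k+1), a j) := by
              rw [hSk, Real.exp_add, hMdef]; ring
  -- uniform bound
  have hbound : ∀ p : ℝ, (N:ℝ) - 1 ≤ p → B p ≤ M₀ * Real.exp T := by
    intro p hp
    obtain ⟨k, hk⟩ := pow_unbounded_of_one_lt (p / N) hε1
    have hNpos : (0:ℝ) < N := by linarith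
    have hεkpos : (0:ℝ) < ε ^ k := by positivity
    have hple : p ≤ (N:ℝ) * ε ^ (k+1) := by
      have h1 : p < (N:ℝ) * ε ^ k := by
        rw [div_lt_iff₀ hNpos] at hk; linarith [hk]
      have h2 : ε ^ k ≤ ε ^ (k+1) := by
        calc ε^k = ε^k*1 := (mul_one _).symm
          _ ≤ ε^k*ε := mul_le_mul_of_nonneg_left hε1.le hεkpos.le
          _ = ε^(k+1) := by ring
      have h3 : (N:ℝ) * ε ^ k ≤ (N:ℝ) * ε ^ (k+1) :=
        mul_le_mul_of_nonneg_left h2 (by linarith)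
      linarith
    exact (key k p hp hple).trans
      (mul_le_mul_of_nonneg_left (Real.exp_le_exp.mpr (hS k)) hM₀pos.le)
  obtain ⟨Cb, hCbdef⟩ : ∃ x : ℝ, x = M₀ * Real.exp T := ⟨_, rfl⟩
  have hbound' : ∀ p : ℝ, (N:ℝ) - 1 ≤ p → B p ≤ Cb := by
    intro p hp; rw [hCbdef]; exact hbound p hp
  have hCbpos : 0 < Cb := by rw [hCbdef]; positivity
  refine ⟨⟨max 1 (Cb * Real.exp s₃), 1, le_max_left _ _, one_pos, ?_⟩, ⟨Cb, hbound'⟩⟩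
  intro p hp
  have hp1 : (1:ℝ) ≤ p := by linarith
  have hp0 : (0:ℝ) < p := by linarith
  have hs₃0 : 0 < s₃ := by
    have : (2:ℝ) ≤ (n:ℝ) := by exact_mod_cast hn
    rw [hs₃]; linarith
  have hfac : Real.exp (-s₃) ≤ ((1:ℝ) * p) ^ (-s₃ / p) := by
    rw [one_mul, Real.rpow_def_of_pos hp0]
    apply Real.exp_le_exp.mpr
    have hlog : Real.log p ≤ p := (Real.log_le_sub_one_of_pos hp0).trans (by linarith)
    have hlogpos : 0 ≤ Real.log p := Real.log_nonneg hp1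
    have h2 : Real.log p * (-s₃/p) = -(s₃ * Real.log p / p) := by ring
    rw [h2, neg_le_neg_iff, div_le_iff₀ hp0]
    exact mul_le_mul_of_nonneg_left hlog hs₃0.le
  calc B p ≤ Cb := hbound' p hp
    _ = (Cb * Real.exp s₃) * Real.exp (-s₃) := by
        rw [mul_assoc, ← Real.exp_add, add_neg_cancel, Real.exp_zero, mul_one]
    _ ≤ max 1 (Cb * Real.exp s₃) * ((1:ℝ) * p) ^ (-s₃/p) :=
        mul_le_mul (le_max_right _ _) hfac (Real.exp_pos _).le
          (le_trans zero_le_one (le_max_left _ _))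
end

section
/- Let n ≥ 2 be an integer, set ε = n/(n−1) and s₃ = 2n. Let p, c₁, s₂ be positive real numbers satisfying 2^{s₃} · c₁ · p^{−1} · ε^{2(n−1)} ≤ s₂². Then (2^{s₃} · c₁ · p) · (s₂ p)^{−s₃} ≤ (s₂ p ε)^{−s₃/ε}. -/
/-- The key induction step in the Moser-iteration lemma. -/
theorem induction_step_inequality
    (n : ℕ) (hn : 2 ≤ n)
    (ε : ℝ) (hε : ε = (n : ℝ) / ((n : ℝ) - 1))
    (s₃ : ℝ) (hs₃ : s₃ = 2 * n)
    (p c₁ s₂ : ℝ) (hp : 0 < p) (hc₁ : 0 < c₁) (hs₂ : 0 < s₂)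
    (h : (2 : ℝ) ^ s₃ * c₁ * p⁻¹ * ε ^ (2 * ((n : ℝ) - 1)) ≤ s₂ ^ 2) :
    (2 : ℝ) ^ s₃ * c₁ * p * (s₂ * p) ^ (-s₃) ≤ (s₂ * p * ε) ^ (-s₃ / ε) := by
  have hn1 : (1 : ℝ) ≤ (n : ℝ) - 1 := by
    have : (2 : ℝ) ≤ (n : ℝ) := by exact_mod_cast hn
    linarith
  have hn0 : (0 : ℝ) < (n : ℝ) := by linarith
  have hn1' : (0 : ℝ) < (n : ℝ) - 1 := by linarith
  have hεpos : 0 < ε := by rw [hε]; positivity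
  have hsp : 0 < s₂ * p := mul_pos hs₂ hp
  have hdiv : s₃ / ε = 2 * ((n : ℝ) - 1) := by
    rw [hs₃, hε]
    field_simp
  have hsplit : -s₃ = -(s₃ / ε) + (-2 : ℝ) := by
    rw [hdiv, hs₃]; ring
  have hLHS : (s₂ * p) ^ (-s₃) = (s₂ * p) ^ (-(s₃ / ε)) * (s₂ * p) ^ (-2 : ℝ) := by
    rw [hsplit, Real.rpow_add hsp]
  have hRHS : (s₂ * p * ε) ^ (-s₃ / ε) = (s₂ * p) ^ (-(s₃ / ε)) * ε ^ (-(s₃ / ε)) := by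
    rw [neg_div, ← Real.mul_rpow hsp.le hεpos.le]
  rw [hLHS, hRHS]
  have key : (2 : ℝ) ^ s₃ * c₁ * p * (s₂ * p) ^ (-2 : ℝ) ≤ ε ^ (-(s₃ / ε)) := by
    rw [Real.rpow_neg hsp.le, Real.rpow_neg hεpos.le, hdiv]
    have h2 : (0:ℝ) < (s₂ * p) ^ (2 : ℝ) := Real.rpow_pos_of_pos hsp _
    have h3 : (0:ℝ) < ε ^ (2 * ((n:ℝ) - 1)) := Real.rpow_pos_of_pos hεpos _
    rw [mul_inv_le_iff₀ h2, inv_mul_eq_div, le_div_iff₀ h3]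
    have hsq : (s₂ * p) ^ (2 : ℝ) = s₂ ^ 2 * p ^ 2 := by
      rw [show (2:ℝ) = ((2:ℕ):ℝ) by norm_num, Real.rpow_natCast]; ring
    rw [hsq]
    have h4 := mul_le_mul_of_nonneg_right h (sq_nonneg p)
    have heq : (2:ℝ) ^ s₃ * c₁ * p⁻¹ * ε ^ (2 * ((n : ℝ) - 1)) * p ^ 2
        = (2:ℝ) ^ s₃ * c₁ * p * ε ^ (2 * ((n : ℝ) - 1)) := by
      field_simp
    rw [heq] at h4
    linarith
  calc (2 : ℝ) ^ s₃ * c₁ * p * ((s₂ * p) ^ (-(s₃ / ε)) * (s₂ * p) ^ (-2 : ℝ))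
      = ((2 : ℝ) ^ s₃ * c₁ * p * (s₂ * p) ^ (-2 : ℝ)) * (s₂ * p) ^ (-(s₃ / ε)) := by ring
    _ ≤ ε ^ (-(s₃ / ε)) * (s₂ * p) ^ (-(s₃ / ε)) := by
        exact mul_le_mul_of_nonneg_right key (Real.rpow_nonneg hsp.le _)
    _ = (s₂ * p) ^ (-(s₃ / ε)) * ε ^ (-(s₃ / ε)) := by ring
end
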